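/- For every integer a ≥ 2, the ℚ-linear map f_a : V_a → V_{a+1} defined on basis vectors by f_a(e_{(r,s)}) = (2/(r+1))·e_{(min(r+1,s), max(r+1,s))} + (2/(s+1))·e_{(r,s+1)} is injective. -/

import Mathlib

/-- The index set `B a = {(r,s) : 1 ≤ r ≤ s, r + s = a}`. -/
def B (a : ℕ) : Type := {p : ℕ × ℕ // 1 ≤ p.1 ∧ p.1 ≤ p.2 ∧ p.1 + p.2 = a}

/-- The ℚ-vector space `V a` of finitely supported functions `B a → ℚ`. -/
abbrev V (a : ℕ) : Type := B a →₀ ℚ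

/-- The image of the basis vector `e_{(r,s)}` under `f_a`, namely
`(2/(r+1)) • e_{(min(r+1,s), max(r+1,s))} + (2/(s+1)) • e_{(r, s+1)}`. -/
noncomputable def fAux (a : ℕ) (p : B a) : V (a + 1) :=
  Finsupp.single
    ⟨(min (p.1.1 + 1) p.1.2, max (p.1.1 + 1) p.1.2), by
      obtain ⟨⟨r, s⟩, h1, h2, h3⟩ := p
      dsimp only at *
      omega⟩ ((2 : ℚ) / (p.1.1 + 1))
  + Finsupp.single
    ⟨(p.1.1, p.1.2 + 1), by
      obtain ⟨⟨r, s⟩, h1, h2, h3⟩ := p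
      dsimp only at *
      omega⟩ ((2 : ℚ) / (p.1.2 + 1))

/-- The ℚ-linear map `f_a : V a → V (a+1)` determined on the standard basis by
`f_a(e_{(r,s)}) = (2/(r+1)) • e_{(min(r+1,s), max(r+1,s))} + (2/(s+1)) • e_{(r, s+1)}`. -/
noncomputable def f (a : ℕ) : V a →ₗ[ℚ] V (a + 1) :=
  Finsupp.lsum ℚ fun p => LinearMap.toSpanSingleton ℚ (V (a + 1)) (fAux a p)

instance (a : ℕ) : DecidableEq (B a) := fun p q =>
  decidable_of_iff (p.1 = q.1) Subtype.ext_iff.symm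

lemma B.ext_iff {a : ℕ} {p q : B a} : p = q ↔ p.1 = q.1 := Subtype.ext_iff

lemma fAux_apply (a : ℕ) (p : B a) (q : B (a + 1)) :
    fAux a p q =
      (if (min (p.1.1 + 1) p.1.2, max (p.1.1 + 1) p.1.2) = q.1 then (2 : ℚ) / (p.1.1 + 1) else 0)
      + (if (p.1.1, p.1.2 + 1) = q.1 then (2 : ℚ) / (p.1.2 + 1) else 0) := by
  rw [fAux]
  simp [Finsupp.single_apply, B.ext_iff]
  classical
  erw [Finsupp.single_apply, Finsupp.single_apply]
  congr 1 <;> exact if_congr Subtype.ext_iff rfl rfl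

theorem f_injective (a : ℕ) (ha : 2 ≤ a) : Function.Injective (f a) := by
  rw [← LinearMap.ker_eq_bot]
  rw [Submodule.eq_bot_iff]
  intro v hv
  rw [LinearMap.mem_ker] at hv
  have happ : ∀ q : B (a + 1), (v.sum fun p c => c * fAux a p q) = 0 := by
    intro q
    have : (f a v) q = 0 := by rw [hv]; rfl
    rw [f, Finsupp.lsum_apply, Finsupp.sum_apply] at this
    simpa using this
  -- show v = 0 by strong induction on the first coordinate
  have key : ∀ r : ℕ, ∀ p : B a, p.1.1 = r → v p = 0 := by
    intro r
    induction r using Nat.strong_induction_on with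
    | _ n ih =>
      rintro ⟨⟨r, s⟩, h1, h2, h3⟩ hr
      dsimp only at hr
      subst hr
      set p : B a := ⟨(r, s), h1, h2, h3⟩ with hp
      have hq : 1 ≤ r ∧ r ≤ s + 1 ∧ r + (s + 1) = a + 1 := by omega
      set q : B (a + 1) := ⟨(r, s + 1), hq⟩ with hqdef
      have hsum := happ q
      rw [Finsupp.sum] at hsum
      rw [Finset.sum_eq_single p] at hsum
      · -- hsum : v p * fAux a p q = 0
        have hfa : fAux a p q = (if r = s then (2:ℚ)/(r+1) else 0) + (2:ℚ)/(s+1) := by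
          rw [fAux_apply]
          show (if ((r+1) ⊓ s, (r+1) ⊔ s) = (r, s+1) then (2:ℚ)/((r:ℚ)+1) else 0)
              + (if ((r : ℕ), s+1) = (r, s+1) then (2:ℚ)/((s:ℚ)+1) else 0) = _
          rw [if_pos rfl]
          congr 1
          by_cases hrs : r = s
          · rw [if_pos hrs,
              if_pos (show ((r+1) ⊓ s, (r+1) ⊔ s) = (r, s+1) by
                simp only [Prod.mk.injEq]; omega)]
          · rw [if_neg hrs,
              if_neg (show ¬((r+1) ⊓ s, (r+1) ⊔ s) = (r, s+1) by
                simp only [Prod.mk.injEq, not_and]; intro hmin; omega)]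
        have hpos : 0 < fAux a p q := by
          rw [hfa]
          have : (0:ℚ) < 2/(s+1) := by positivity
          split_ifs with h
          · have : (0:ℚ) < 2/(r+1) := by positivity
            positivity
          · simpa using ‹(0:ℚ) < 2/(s+1)›
        have := hsum
        rcases mul_eq_zero.mp this with h | h
        · exact h
        · exact absurd h (ne_of_gt hpos)
      · -- other support elements contribute 0
        rintro ⟨⟨r'', s''⟩, g1, g2, g3⟩ _ hne
        have hzero : fAux a (⟨(r'', s''), g1, g2, g3⟩ : B a) q = 0 ∨ r'' < r := by
          by_cases hlt : r'' < r
          · exact Or.inr hlt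
          · left
            erw [fAux_apply]
            have hne' : ((r'', s'') : ℕ × ℕ) ≠ (r, s) := by
              intro hcontra
              exact hne (by exact Subtype.ext hcontra)
            rw [if_neg, if_neg]
            · norm_num
            · show ¬ ((r'', s''+1) = (r, s+1))
              simp only [Prod.mk.injEq, not_and]
              intro h h'
              exact absurd (by simp [Prod.ext_iff]; omega : ((r'', s'') : ℕ × ℕ) = (r, s)) hne'
            · show ¬ (((r''+1) ⊓ s'', (r''+1) ⊔ s'') = (r, s+1))
              simp only [Prod.mk.injEq, not_and]
              intro hmin hmax
              -- min(r''+1, s'') = r and max = s+1, with r'' ≥ r, r'' ≤ s''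
              -- if r'' < s'' : r''+1 = r contradiction with r'' ≥ r
              -- if r'' = s'' : r'' = r and r''+1 = s+1 so s = r'' = r, contra with hne'
              have : r'' = r ∧ s'' = s := by omega
              exact hne' (by simp [Prod.ext_iff, this.1, this.2])
        rcases hzero with h | h
        · rw [h]; simp
        · rw [ih r'' h ⟨(r'', s''), g1, g2, g3⟩ rfl]; ring
      · intro hns
        rw [Finsupp.notMem_support_iff.mp hns]; ring
  ext p
  exact key p.1.1 p rfl
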